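/- Let α, γ ∈ ℝ with 0 < α and 0 < γ, let w_k > 0, let w̄ ∈ ℝ with 0 < w̄ < 1, let i ≥ 1 be a natural number, let x_{i−1} > 0 and x_i := (x_{i−1}(1 − w̄))^α. Define the multipliers β_i := γ^i/(α x_i^α (1 − w̄)^{α−1} w_k) and β_{i−1} := γ^{i−1}/(α x_{i−1}^α (1 − w̄)^{α−1} w_k). Then the Euler–Lagrange equation γ^i + β_i · α x_i^α (1 − w̄)^α − β_{i−1} x_i = 0 holds if and only if αγ(1 + w_k − w̄) = 1 − w̄. -/
import Mathlib


/-- With the dual variables `β_i = γ^i/(α x_i^α (1-w̄)^(α-1) w_k)` obtained from the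
KKT stationarity condition in the policy parameter, the Euler–Lagrange equation
`γ^i + β_i α x_i^α (1-w̄)^α - β_{i-1} x_i = 0` of the great fish war OCP holds
if and only if `αγ(1 + w_k - w̄) = 1 - w̄`. -/
theorem fish_war_euler_lagrange_iff (α γ wk wbar : ℝ)
    (hα : 0 < α) (hγ : 0 < γ) (hwk : 0 < wk)
    (hwbar0 : 0 < wbar) (hwbar1 : wbar < 1)
    (i : ℕ) (hi : 1 ≤ i) (xm : ℝ) (hxm : 0 < xm) :
    (γ ^ i
      + (γ ^ i / (α * ((xm * (1 - wbar)) ^ α) ^ α * (1 - wbar) ^ (α - 1) * wk))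
          * α * ((xm * (1 - wbar)) ^ α) ^ α * (1 - wbar) ^ α
      - (γ ^ (i - 1) / (α * xm ^ α * (1 - wbar) ^ (α - 1) * wk))
          * ((xm * (1 - wbar)) ^ α) = 0)
    ↔ α * γ * (1 + wk - wbar) = 1 - wbar := by
  obtain ⟨j, rfl⟩ : ∃ j, i = j + 1 := ⟨i - 1, (Nat.succ_pred_eq_of_pos hi).symm⟩
  have hs : (0:ℝ) < 1 - wbar := by linarith
  have hA : (0:ℝ) < (xm * (1 - wbar)) ^ α :=
    Real.rpow_pos_of_pos (by positivity) α
  have hB : (0:ℝ) < ((xm * (1 - wbar)) ^ α) ^ α := Real.rpow_pos_of_pos hA α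
  have hxα : (0:ℝ) < xm ^ α := Real.rpow_pos_of_pos hxm α
  have hsα : (0:ℝ) < (1 - wbar) ^ α := Real.rpow_pos_of_pos hs α
  have hC : (1 - wbar) ^ (α - 1) = (1 - wbar) ^ α / (1 - wbar) := by
    rw [Real.rpow_sub hs, Real.rpow_one]
  have hsplit : (xm * (1 - wbar)) ^ α = xm ^ α * (1 - wbar) ^ α :=
    Real.mul_rpow hxm.le hs.le
  have hγj : (0:ℝ) < γ ^ j := pow_pos hγ j
  rw [hC, hsplit]
  have key : γ ^ (j + 1)
      + (γ ^ (j + 1) / (α * (xm ^ α * (1 - wbar) ^ α) ^ α * ((1 - wbar) ^ α / (1 - wbar)) * wk))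
          * α * (xm ^ α * (1 - wbar) ^ α) ^ α * (1 - wbar) ^ α
      - (γ ^ (j + 1 - 1) / (α * xm ^ α * ((1 - wbar) ^ α / (1 - wbar)) * wk))
          * (xm ^ α * (1 - wbar) ^ α)
      = γ ^ j / (α * wk) * (α * γ * (1 + wk - wbar) - (1 - wbar)) := by
    have hBp : (0:ℝ) < (xm ^ α * (1 - wbar) ^ α) ^ α :=
      Real.rpow_pos_of_pos (by positivity) α
    simp only [Nat.add_sub_cancel, pow_succ]
    field_simp
    ring
  rw [key]
  constructor
  · intro h
    have := mul_eq_zero.mp h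
    rcases this with h1 | h2
    · exact absurd h1 (by positivity)
    · linarith
  · intro h
    rw [h]
    ring
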